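/- Let ABCD be a quadrilateral in the plane, and let U ∈ line BC and V ∈ line AD be arbitrary points. Set M = BV ∩ AC and N = AU ∩ BD. Then the three lines MN, CD, and UV are concurrent (or all parallel). -/
import Mathlib


open Matrix

noncomputable section

/-- A point (or line) of the real projective plane, represented by a vector of
homogeneous coordinates in `ℝ³`. -/
abbrev PPt : Type := Fin 3 → ℝ

/-- The cross product: used both for the join of two points (giving the line through
them as a covector) and for the meet of two lines (giving their intersection point). -/
def pcross (a b : PPt) : PPt := crossProduct a b

/-- Three points (or three lines) are collinear (resp. concurrent) iff the determinant
of their homogeneous coordinates vanishes. -/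
def collin (a b c : PPt) : Prop := Matrix.det (Matrix.of ![a, b, c]) = 0

set_option maxRecDepth 8000

private lemma pcross_apply0 (a b : PPt) : pcross a b 0 = a 1 * b 2 - a 2 * b 1 := by
  simp [pcross, cross_apply]

private lemma pcross_apply1 (a b : PPt) : pcross a b 1 = a 2 * b 0 - a 0 * b 2 := by
  simp [pcross, cross_apply]

private lemma pcross_apply2 (a b : PPt) : pcross a b 2 = a 0 * b 1 - a 1 * b 0 := by
  simp [pcross, cross_apply]

private lemma det_expand (a b c : PPt) :
    Matrix.det (Matrix.of ![a, b, c]) =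
      a 0 * (b 1 * c 2 - b 2 * c 1) - a 1 * (b 0 * c 2 - b 2 * c 0)
        + a 2 * (b 0 * c 1 - b 1 * c 0) := by
  simp [Matrix.det_fin_three]
  ring

/-- **Sharygin's problem, projective version.** Let `A B C D` be four points, no three
collinear, `u ∈ BC` and `v ∈ AD` arbitrary points, `M = Bv ∩ AC`, `N = Au ∩ BD`.
Then the lines `MN`, `CD` and `uv` are concurrent. -/
theorem sharygin_projective (A B C D u v M N : PPt)
    (hABC : ¬ collin A B C) (hABD : ¬ collin A B D)
    (hACD : ¬ collin A C D) (hBCD : ¬ collin B C D)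
    (hu0 : u ≠ 0) (hu : collin B C u)
    (hv0 : v ≠ 0) (hv : collin A D v)
    (hM : M = pcross (pcross B v) (pcross A C))
    (hN : N = pcross (pcross A u) (pcross B D))
    (hM0 : M ≠ 0) (hN0 : N ≠ 0)
    (hMN : pcross M N ≠ 0) (huv : pcross u v ≠ 0) :
    ∃ P : PPt, P ≠ 0 ∧ collin M N P ∧ collin C D P ∧ collin u v P := by

  subst hM hN
  set M := pcross (pcross B v) (pcross A C) with hM
  set N := pcross (pcross A u) (pcross B D) with hN
  have hu' := hu
  have hv' := hv
  rw [collin, det_expand] at hu' hv'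
  have key : Matrix.det (Matrix.of ![pcross M N, pcross C D, pcross u v]) = 0 := by
    rw [det_expand]
    simp only [hM, hN, pcross_apply0, pcross_apply1, pcross_apply2]
    linear_combination
      (-((A 0 * (B 1 * v 2 - B 2 * v 1) - A 1 * (B 0 * v 2 - B 2 * v 0) + A 2 * (B 0 * v 1 - B 1 * v 0)) *
         (A 0 * (D 1 * u 2 - D 2 * u 1) - A 1 * (D 0 * u 2 - D 2 * u 0) + A 2 * (D 0 * u 1 - D 1 * u 0)) *
         (C 0 * (D 1 * v 2 - D 2 * v 1) - C 1 * (D 0 * v 2 - D 2 * v 0) + C 2 * (D 0 * v 1 - D 1 * v 0)))) * hu' +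
      (-((C 0 * (B 1 * v 2 - B 2 * v 1) - C 1 * (B 0 * v 2 - B 2 * v 0) + C 2 * (B 0 * v 1 - B 1 * v 0)) *
         (A 0 * (B 1 * u 2 - B 2 * u 1) - A 1 * (B 0 * u 2 - B 2 * u 0) + A 2 * (B 0 * u 1 - B 1 * u 0)) *
         (C 0 * (D 1 * u 2 - D 2 * u 1) - C 1 * (D 0 * u 2 - D 2 * u 0) + C 2 * (D 0 * u 1 - D 1 * u 0)))) * hv'
  obtain ⟨P, hP0, hP⟩ := (Matrix.exists_mulVec_eq_zero_iff).mpr key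
  have h0 := congrFun hP 0
  have h1 := congrFun hP 1
  have h2 := congrFun hP 2
  simp only [Matrix.mulVec, dotProduct, Fin.sum_univ_three, Matrix.of_apply,
    Matrix.cons_val', Matrix.cons_val_zero, Matrix.cons_val_one, Matrix.head_cons,
    Matrix.empty_val', Matrix.cons_val_fin_one, Matrix.head_fin_const, Matrix.cons_val_two,
    Matrix.tail_cons, Pi.zero_apply, pcross_apply0, pcross_apply1, pcross_apply2] at h0 h1 h2
  refine ⟨P, hP0, ?_, ?_, ?_⟩ <;>
  · rw [collin, det_expand]
    first
    | linear_combination h0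
    | linear_combination h1
    | linear_combination h2
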